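/- Let R be a commutative ring with identity, I an ideal of R, and P a proper ideal of R. Then P is an I-prime ideal of R if and only if the image of P in the quotient ring R/(I·P) is a weakly prime ideal of R/(I·P). -/

import Mathlib

/-- A proper ideal `P` of a commutative ring `R` is `I`-prime if whenever
`a * b ∈ P \ I*P`, then `a ∈ P` or `b ∈ P`. -/
def IsIPrime {R : Type*} [CommRing R] (I P : Ideal R) : Prop :=
  P ≠ ⊤ ∧ ∀ a b : R, a * b ∈ P → a * b ∉ I * P → a ∈ P ∨ b ∈ P

/-- A proper ideal `Q` is weakly prime if whenever `a * b ∈ Q \ {0}`,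
then `a ∈ Q` or `b ∈ Q`. -/
def IsWeaklyPrime {R : Type*} [CommRing R] (Q : Ideal R) : Prop :=
  Q ≠ ⊤ ∧ ∀ a b : R, a * b ∈ Q → a * b ≠ 0 → a ∈ Q ∨ b ∈ Q

theorem stmt_0 {R : Type*} [CommRing R] (I P : Ideal R) (hP : P ≠ ⊤) :
    IsIPrime I P ↔ IsWeaklyPrime (P.map (Ideal.Quotient.mk (I * P))) := by
  have hle : I * P ≤ P := Ideal.mul_le_right
  have hmem : ∀ x : R, Ideal.Quotient.mk (I * P) x ∈
      P.map (Ideal.Quotient.mk (I * P)) ↔ x ∈ P := fun x =>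
    Ideal.mem_quotient_iff_mem hle
  have hzero : ∀ x : R, Ideal.Quotient.mk (I * P) x = 0 ↔ x ∈ I * P := fun x =>
    Ideal.Quotient.eq_zero_iff_mem
  constructor
  · rintro ⟨-, h⟩
    constructor
    · intro htop
      apply hP
      rw [Ideal.eq_top_iff_one] at htop ⊢
      exact (hmem 1).mp (by simpa using htop)
    · intro a b hab hne
      obtain ⟨a, rfl⟩ := Ideal.Quotient.mk_surjective a
      obtain ⟨b, rfl⟩ := Ideal.Quotient.mk_surjective b
      rw [← map_mul] at hab hne
      rw [hmem] at hab ⊢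
      rw [hmem b]
      exact h a b hab (fun hm => hne ((hzero _).mpr hm))
  · rintro ⟨-, h⟩
    refine ⟨hP, fun a b hab hne => ?_⟩
    have := h (Ideal.Quotient.mk (I * P) a) (Ideal.Quotient.mk (I * P) b)
      (by rw [← map_mul]; exact (hmem (a * b)).mpr hab)
      (by rw [← map_mul]; exact fun hz => hne ((hzero _).mp hz))
    rwa [hmem, hmem] at this
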